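/- Let C be a regular conic, p ∈ C, and suppose the two isotropic lines through p (the tangents from p to the absolute conic N) meet C again in points i and ī distinct from p. Then the pole f of the line i ∨ ī with respect to C has the Frégier property: for all q, r ∈ C with lines pq and pr perpendicular (conjugate with respect to N), the points q, r, f are collinear. -/

import Mathlib

/-- Points of the real projective plane, given by homogeneous coordinates `[x₀, x₁, x₂]`. -/
abbrev PP := Fin 3 → ℝ

/-- Cross product: line joining two points / point of intersection of two lines. -/
def cross3 (a b : PP) : PP :=
  ![a 1 * b 2 - a 2 * b 1, a 2 * b 0 - a 0 * b 2, a 0 * b 1 - a 1 * b 0]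

def dot3 (a b : PP) : ℝ := a 0 * b 0 + a 1 * b 1 + a 2 * b 2

/-- `q`, `r`, `f` are collinear. -/
def Coll (q r f : PP) : Prop := dot3 (cross3 q r) f = 0

/-- Euclidean perpendicularity of the lines `pq` and `pr`
(standard inner product on directions in the affine chart `x₀ = 1`). -/
def EuclidPerp (p q r : PP) : Prop :=
  (q 1 * p 0 - p 1 * q 0) * (r 1 * p 0 - p 1 * r 0) +
    (q 2 * p 0 - p 2 * q 0) * (r 2 * p 0 - p 2 * r 0) = 0

/-- Hyperbolic perpendicularity of the lines `pq` and `pr`: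
conjugacy with respect to the absolute conic `N : x₁² + x₂² = x₀²`
(a line is perpendicular to another iff it contains its pole w.r.t. `N`). -/
def HypPerp (p q r : PP) : Prop :=
  -(cross3 p q 0 * cross3 p r 0) + cross3 p q 1 * cross3 p r 1 +
    cross3 p q 2 * cross3 p r 2 = 0

/-- Elliptic perpendicularity of the lines `pq` and `pr`:
conjugacy with respect to the absolute polarity `x₀² + x₁² + x₂²`. -/
def EllPerp (p q r : PP) : Prop :=
  dot3 (cross3 p q) (cross3 p r) = 0

/-- `f` lies on every chord `qr` of the conic `C` such that the legs `pq`, `pr`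
are perpendicular (a right triangle inscribed in `C` with right angle at `p`). -/
def IsFregier (OnC : PP → Prop) (Perp : PP → PP → PP → Prop) (p f : PP) : Prop :=
  ∀ q r : PP, OnC q → OnC r → cross3 p q ≠ 0 → cross3 p r ≠ 0 → Perp p q r →
    Coll q r f

/-- `f` is THE Frégier point of the conic `C` at `p`: the common point of the
hypotenuses of all right triangles inscribed in `C` with right angle at `p`
(unique up to scalar). -/
def IsFregierPoint (OnC : PP → Prop) (Perp : PP → PP → PP → Prop) (p f : PP) : Prop :=
  f ≠ 0 ∧ IsFregier OnC Perp p f ∧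
    ∀ f' : PP, f' ≠ 0 → IsFregier OnC Perp p f' → ∃ t : ℝ, t ≠ 0 ∧ f' = t • f

/-- The Frégier locus of a conic: all Frégier points as `p` varies on the conic. -/
def FregierLocus (OnC : PP → Prop) (Perp : PP → PP → PP → Prop) : Set PP :=
  { f | ∃ p : PP, p ≠ 0 ∧ OnC p ∧ IsFregierPoint OnC Perp p f }

/-! ### Auxiliary lemmas -/

lemma pp_ext3 {a b : PP} (h0 : a 0 = b 0) (h1 : a 1 = b 1) (h2 : a 2 = b 2) : a = b := by
  funext k; fin_cases k <;> assumption

@[simp] lemma cross3_apply0' (a b : PP) : cross3 a b 0 = a 1 * b 2 - a 2 * b 1 := rfl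
@[simp] lemma cross3_apply1' (a b : PP) : cross3 a b 1 = a 2 * b 0 - a 0 * b 2 := rfl
@[simp] lemma cross3_apply2' (a b : PP) : cross3 a b 2 = a 0 * b 1 - a 1 * b 0 := rfl

lemma dot3_comm' (a b : PP) : dot3 a b = dot3 b a := by simp [dot3]; ring

lemma cross3_self' (a : PP) : cross3 a a = 0 := by apply pp_ext3 <;> simp <;> ring

lemma cross3_smul_left' (t : ℝ) (a b : PP) : cross3 (t • a) b = t • cross3 a b := by
  apply pp_ext3 <;> simp <;> ring

lemma cross3_sub_left' (a a' b : PP) : cross3 (a - a') b = cross3 a b - cross3 a' b := by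
  apply pp_ext3 <;> simp <;> ring

lemma cross3_comb_right' (x u v w : PP) (c1 c2 c3 : ℝ) :
    cross3 x (c1 • u + c2 • v + c3 • w) =
      c1 • cross3 x u + c2 • cross3 x v + c3 • cross3 x w := by
  apply pp_ext3 <;> simp <;> ring

lemma triple3 (x a b : PP) :
    cross3 x (cross3 a b) = dot3 x b • a - dot3 x a • b := by
  apply pp_ext3 <;> simp [dot3] <;> ring

lemma cross_cross_same3 (x y z : PP) :
    cross3 (cross3 x y) (cross3 x z) = dot3 (cross3 x y) z • x := by
  apply pp_ext3 <;> simp [dot3] <;> ring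

lemma cramer3 (a b c u : PP) :
    dot3 (cross3 a b) c • u =
      dot3 (cross3 u b) c • a + dot3 (cross3 a u) c • b + dot3 (cross3 a b) u • c := by
  apply pp_ext3 <;> simp [dot3] <;> ring

lemma eq_smul_of_cross_zero3 {u v : PP} (h : cross3 u v = 0) (hv : v ≠ 0) :
    ∃ t : ℝ, u = t • v := by
  have h0 := congrFun h 0
  have h1 := congrFun h 1
  have h2 := congrFun h 2
  simp at h0 h1 h2
  by_cases hv0 : v 0 ≠ 0
  · refine ⟨u 0 / v 0, pp_ext3 ?_ ?_ ?_⟩ <;> simp only [Pi.smul_apply, smul_eq_mul] <;> field_simp <;> linarith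
  by_cases hv1 : v 1 ≠ 0
  · refine ⟨u 1 / v 1, pp_ext3 ?_ ?_ ?_⟩ <;> simp only [Pi.smul_apply, smul_eq_mul] <;> field_simp <;> linarith
  · have hv2 : v 2 ≠ 0 := by
      intro hz; apply hv; push_neg at hv0 hv1; exact pp_ext3 hv0 hv1 hz
    refine ⟨u 2 / v 2, pp_ext3 ?_ ?_ ?_⟩ <;> simp only [Pi.smul_apply, smul_eq_mul] <;> field_simp <;> linarith

lemma exists_smul_cross3 {y a b : PP} (ha : dot3 y a = 0) (hb : dot3 y b = 0)
    (hab : cross3 a b ≠ 0) : ∃ t : ℝ, y = t • cross3 a b := by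
  apply eq_smul_of_cross_zero3 _ hab
  rw [triple3, ha, hb]; simp

lemma mulVec_eq_zero3 {M : Matrix (Fin 3) (Fin 3) ℝ} (hM : IsUnit M.det) {x : PP}
    (h : M.mulVec x = 0) : x = 0 := by
  have := congrArg (fun v => M⁻¹.mulVec v) h
  simp only [Matrix.mulVec_mulVec, Matrix.nonsing_inv_mul M hM, Matrix.mulVec_zero,
    Matrix.one_mulVec] at this
  exact this

lemma form_symm3 {N : Matrix (Fin 3) (Fin 3) ℝ} (hN : N.IsSymm) (x y : PP) :
    dot3 x (N.mulVec y) = dot3 y (N.mulVec x) := by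
  simp [dot3, Matrix.mulVec, dotProduct, Fin.sum_univ_three,
    hN.apply 0 1, hN.apply 0 2, hN.apply 1 2]
  ring

lemma dot3_self_ne_zero3 {n : PP} (h : n ≠ 0) : dot3 n n ≠ 0 := by
  intro h0
  simp [dot3] at h0
  apply h
  apply pp_ext3 <;> simp <;>
    nlinarith [sq_nonneg (n 0), sq_nonneg (n 1), sq_nonneg (n 2)]

/-- A symmetric form with invertible matrix cannot vanish identically on the span of two
independent vectors. -/
lemma form_ne_zero3 {N : Matrix (Fin 3) (Fin 3) ℝ} (hN : N.IsSymm) (hNd : IsUnit N.det)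
    {a b : PP} (hab : cross3 a b ≠ 0)
    (ha : dot3 a (N.mulVec a) = 0) (hb : dot3 b (N.mulVec b) = 0) :
    dot3 a (N.mulVec b) ≠ 0 := by
  intro h0
  have hbne : b ≠ 0 := by rintro rfl; apply hab; apply pp_ext3 <;> simp
  have hane : a ≠ 0 := by rintro rfl; apply hab; apply pp_ext3 <;> simp
  have hya : dot3 (N.mulVec a) a = 0 := by rw [dot3_comm']; exact ha
  have hyb : dot3 (N.mulVec a) b = 0 := by rw [dot3_comm', form_symm3 hN]; exact h0
  have hza : dot3 (N.mulVec b) a = 0 := by rw [dot3_comm']; exact h0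
  have hzb : dot3 (N.mulVec b) b = 0 := by rw [dot3_comm']; exact hb
  obtain ⟨s, hs⟩ := exists_smul_cross3 hya hyb hab
  obtain ⟨t, ht⟩ := exists_smul_cross3 hza hzb hab
  have key : N.mulVec (t • a - s • b) = 0 := by
    rw [Matrix.mulVec_sub, Matrix.mulVec_smul, Matrix.mulVec_smul, hs, ht]
    apply pp_ext3 <;> simp <;> ring
  have h2 : t • a - s • b = 0 := mulVec_eq_zero3 hNd key
  have hba : cross3 b a ≠ 0 := by
    intro h
    apply hab
    have : cross3 a b = -(cross3 b a) := by apply pp_ext3 <;> simp <;> ring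
    rw [this, h, neg_zero]
  have ht0 : t = 0 := by
    have hc := congrArg (fun v => cross3 v b) h2
    simp only [cross3_sub_left', cross3_smul_left', cross3_self'] at hc
    have hc' : t • cross3 a b = 0 := by
      have e0 := congrFun hc 0
      have e1 := congrFun hc 1
      have e2 := congrFun hc 2
      apply pp_ext3 <;> simp at e0 e1 e2 ⊢ <;> tauto
    rcases smul_eq_zero.mp hc' with h | h
    · exact h
    · exact absurd h hab
  have hs0 : s = 0 := by
    have hc := congrArg (fun v => cross3 v a) h2
    simp only [cross3_sub_left', cross3_smul_left', cross3_self'] at hc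
    have hc' : s • cross3 b a = 0 := by
      have e0 := congrFun hc 0
      have e1 := congrFun hc 1
      have e2 := congrFun hc 2
      apply pp_ext3 <;> simp at e0 e1 e2 ⊢ <;> tauto
    rcases smul_eq_zero.mp hc' with h | h
    · exact h
    · exact absurd h hba
  rw [hs0] at hs
  simp at hs
  exact hane (mulVec_eq_zero3 hNd hs)

/-- Cramer decomposition of a vector with respect to a basis. -/
lemma cramer_decomp3 {a b c : PP} (u : PP) (hD : dot3 (cross3 a b) c ≠ 0) :
    u = (dot3 (cross3 u b) c / dot3 (cross3 a b) c) • a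
      + (dot3 (cross3 a u) c / dot3 (cross3 a b) c) • b
      + (dot3 (cross3 a b) u / dot3 (cross3 a b) c) • c := by
  have e0 := congrFun (cramer3 a b c u) 0
  have e1 := congrFun (cramer3 a b c u) 1
  have e2 := congrFun (cramer3 a b c u) 2
  simp only [Pi.smul_apply, Pi.add_apply, smul_eq_mul] at e0 e1 e2
  refine pp_ext3 ?_ ?_ ?_ <;> simp only [Pi.smul_apply, Pi.add_apply, smul_eq_mul] <;>
    field_simp
  · linear_combination e0
  · linear_combination e1
  · linear_combination e2

lemma comb_expand3 (M : Matrix (Fin 3) (Fin 3) ℝ) (c1 c2 c3 d1 d2 d3 : ℝ) (u v w x y z : PP) :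
    dot3 (M.mulVec (c1 • u + c2 • v + c3 • w)) (d1 • x + d2 • y + d3 • z) =
      c1 * d1 * dot3 (M.mulVec u) x + c1 * d2 * dot3 (M.mulVec u) y
      + c1 * d3 * dot3 (M.mulVec u) z
      + c2 * d1 * dot3 (M.mulVec v) x + c2 * d2 * dot3 (M.mulVec v) y
      + c2 * d3 * dot3 (M.mulVec v) z
      + c3 * d1 * dot3 (M.mulVec w) x + c3 * d2 * dot3 (M.mulVec w) y
      + c3 * d3 * dot3 (M.mulVec w) z := by
  simp [dot3, Matrix.mulVec, dotProduct, Fin.sum_univ_three]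
  ring

lemma comb_expand_left3 (M : Matrix (Fin 3) (Fin 3) ℝ) (c1 c2 c3 : ℝ) (u v w y : PP) :
    dot3 (M.mulVec (c1 • u + c2 • v + c3 • w)) y =
      c1 * dot3 (M.mulVec u) y + c2 * dot3 (M.mulVec v) y + c3 * dot3 (M.mulVec w) y := by
  simp [dot3, Matrix.mulVec, dotProduct, Fin.sum_univ_three]
  ring

lemma comb_expand_right3 (M : Matrix (Fin 3) (Fin 3) ℝ) (c1 c2 c3 : ℝ) (x u v w : PP) :
    dot3 (M.mulVec x) (c1 • u + c2 • v + c3 • w) =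
      c1 * dot3 (M.mulVec x) u + c2 * dot3 (M.mulVec x) v + c3 * dot3 (M.mulVec x) w := by
  simp [dot3, Matrix.mulVec, dotProduct, Fin.sum_univ_three]
  ring

lemma dotN_comb3 (N : Matrix (Fin 3) (Fin 3) ℝ) (c1 c2 d1 d2 : ℝ) (u v x y : PP) :
    dot3 (c1 • u + c2 • v) (N.mulVec (d1 • x + d2 • y)) =
      c1 * d1 * dot3 u (N.mulVec x) + c1 * d2 * dot3 u (N.mulVec y)
      + c2 * d1 * dot3 v (N.mulVec x) + c2 * d2 * dot3 v (N.mulVec y) := by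
  simp [dot3, Matrix.mulVec, dotProduct, Fin.sum_univ_three]
  ring

lemma dot3_smul_right3 (c : ℝ) (x y : PP) : dot3 x (c • y) = c * dot3 x y := by
  simp [dot3]; ring

/-- The adjugate pairing identity for a symmetric matrix. -/
lemma adj_pairing3 {M : Matrix (Fin 3) (Fin 3) ℝ} (hM : M.IsSymm) (x y z w : PP) :
    dot3 (cross3 x y) (M.adjugate.mulVec (cross3 z w)) =
      dot3 (M.mulVec x) z * dot3 (M.mulVec y) w
      - dot3 (M.mulVec x) w * dot3 (M.mulVec y) z := by
  rw [Matrix.adjugate_fin_three]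
  simp [dot3, Matrix.mulVec, dotProduct, Fin.sum_univ_three,
    hM.apply 0 1, hM.apply 0 2, hM.apply 1 2]
  ring

/-- Let `C` be a regular conic (symmetric regular matrix `M`) and
`N` a regular absolute conic (symmetric regular matrix `A`), `p ∈ C`, and suppose
the two isotropic lines through `p` (lines through `p` tangent to `N`, i.e.
self-conjugate w.r.t. `A`) meet `C` again in points `i`, `ī` distinct from `p`.
Then the pole `f = M⁻¹ (i ∨ ī)` of the line `i ∨ ī` with respect to `C` has the
Frégier property: for all `q, r ∈ C` with `pq ⟂ pr`, the points `q, r, f` are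
collinear. -/
theorem pole_of_isotropic_chord_is_fregier_point
    (M A : Matrix (Fin 3) (Fin 3) ℝ) (hM : M.IsSymm) (hMreg : IsUnit M.det)
    (hA : A.IsSymm) (hAreg : IsUnit A.det)
    (p i ibar : PP) (hp : p ≠ 0)
    (hpC : dot3 (M.mulVec p) p = 0)
    (hiC : dot3 (M.mulVec i) i = 0) (hibarC : dot3 (M.mulVec ibar) ibar = 0)
    (hpi : cross3 p i ≠ 0) (hpibar : cross3 p ibar ≠ 0)
    (hii : cross3 i ibar ≠ 0)
    (hiso1 : dot3 (cross3 p i) (A⁻¹.mulVec (cross3 p i)) = 0)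
    (hiso2 : dot3 (cross3 p ibar) (A⁻¹.mulVec (cross3 p ibar)) = 0) :
    ∀ q r : PP, dot3 (M.mulVec q) q = 0 → dot3 (M.mulVec r) r = 0 →
      cross3 p q ≠ 0 → cross3 p r ≠ 0 →
      dot3 (cross3 p q) (A⁻¹.mulVec (cross3 p r)) = 0 →
      Coll q r (M⁻¹.mulVec (cross3 i ibar)) := by
  intro q r hqC hrC hpq hpr hperp
  -- symmetry of the M-form
  have sym : ∀ x y : PP, dot3 (M.mulVec x) y = dot3 (M.mulVec y) x := by
    intro x y
    rw [dot3_comm', form_symm3 hM, dot3_comm']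
  -- `P, Qb, K` notation
  set P := dot3 (M.mulVec p) i with hPdef
  set Qb := dot3 (M.mulVec p) ibar with hQbdef
  set K := dot3 (M.mulVec i) ibar with hKdef
  -- the tangency lemma: chords through p are not tangent directions
  have tangent : ∀ x : PP, dot3 (M.mulVec x) x = 0 → cross3 p x ≠ 0 →
      dot3 (M.mulVec p) x ≠ 0 := by
    intro x hx hcx
    have h1 : dot3 p (M.mulVec p) = 0 := by rw [dot3_comm']; exact hpC
    have h2 : dot3 x (M.mulVec x) = 0 := by rw [dot3_comm']; exact hx
    have h3 := form_ne_zero3 hM hMreg hcx h1 h2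
    rw [form_symm3 hM, dot3_comm'] at h3
    exact h3
  have hP0 : P ≠ 0 := tangent i hiC hpi
  have hQb0 : Qb ≠ 0 := tangent ibar hibarC hpibar
  -- p, i, ibar form a basis
  have hDpii : dot3 (cross3 p i) ibar ≠ 0 := by
    intro hD0
    have hnn : dot3 (cross3 p i) (cross3 p i) ≠ 0 := dot3_self_ne_zero3 hpi
    have hib := cramer_decomp3 (a := p) (b := i) (c := cross3 p i) ibar hnn
    rw [hD0] at hib
    have hcpib := congrArg (fun v => cross3 p v) hib
    simp only [cross3_comb_right'] at hcpib
    have hcib := congrArg (fun v => cross3 i v) hib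
    simp only [cross3_comb_right'] at hcib
    -- expand the conic condition for ibar
    have e := hibarC
    rw [hib, comb_expand3] at e
    rw [sym i p] at e
    rw [hpC, hiC] at e
    have hst : (dot3 (cross3 ibar i) (cross3 p i) / dot3 (cross3 p i) (cross3 p i)) *
        (dot3 (cross3 p ibar) (cross3 p i) / dot3 (cross3 p i) (cross3 p i)) * P = 0 := by
      linear_combination e / 2
        + ((dot3 (cross3 ibar i) (cross3 p i) / dot3 (cross3 p i) (cross3 p i)) *
            (0 / dot3 (cross3 p i) (cross3 p i)) / 2) * sym (cross3 p i) p
        + ((dot3 (cross3 p ibar) (cross3 p i) / dot3 (cross3 p i) (cross3 p i)) *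
            (0 / dot3 (cross3 p i) (cross3 p i)) / 2) * sym (cross3 p i) i
    rcases mul_eq_zero.mp hst with h | h
    · rcases mul_eq_zero.mp h with h' | h'
      · -- coefficient of p is zero: ibar is a multiple of i
        apply hii
        rw [hcib, h']
        rw [cross3_self']
        apply pp_ext3 <;> simp
      · -- coefficient of i is zero: ibar is a multiple of p
        apply hpibar
        rw [hcpib, h']
        rw [cross3_self']
        apply pp_ext3 <;> simp
    · exact hP0 h
  -- decompose q and r over the basis p, i, ibar
  obtain ⟨lam, al, be, hqd⟩ : ∃ lam al be : ℝ, q = lam • p + al • i + be • ibar :=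
    ⟨_, _, _, cramer_decomp3 q hDpii⟩
  obtain ⟨mu, ga, de, hrd⟩ : ∃ mu ga de : ℝ, r = mu • p + ga • i + de • ibar :=
    ⟨_, _, _, cramer_decomp3 r hDpii⟩
  -- conic conditions in coordinates
  have hq2 : al * be * K + lam * (al * P + be * Qb) = 0 := by
    have e := hqC
    rw [hqd, comb_expand3, sym i p, sym ibar p, sym ibar i, hpC, hiC, hibarC] at e
    linear_combination e / 2
  have hr2 : ga * de * K + mu * (ga * P + de * Qb) = 0 := by
    have e := hrC
    rw [hrd, comb_expand3, sym i p, sym ibar p, sym ibar i, hpC, hiC, hibarC] at e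
    linear_combination e / 2
  -- the A-side: the involution condition
  have hAinvSymm : (A⁻¹).IsSymm := by
    unfold Matrix.IsSymm
    rw [Matrix.transpose_nonsing_inv, hA.eq]
  have hAinvDet : IsUnit (Matrix.det A⁻¹) := Matrix.isUnit_nonsing_inv_det A hAreg
  have hcc : cross3 (cross3 p i) (cross3 p ibar) ≠ 0 := by
    rw [cross_cross_same3]
    intro h
    rcases smul_eq_zero.mp h with h' | h'
    · exact hDpii h'
    · exact hp h'
  have hAB : dot3 (cross3 p i) (A⁻¹.mulVec (cross3 p ibar)) ≠ 0 :=
    form_ne_zero3 hAinvSymm hAinvDet hcc hiso1 hiso2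
  have hcq : cross3 p q = al • cross3 p i + be • cross3 p ibar := by
    rw [hqd, cross3_comb_right', cross3_self']
    apply pp_ext3 <;> simp
  have hcr : cross3 p r = ga • cross3 p i + de • cross3 p ibar := by
    rw [hrd, cross3_comb_right', cross3_self']
    apply pp_ext3 <;> simp
  have hR1 : al * de + be * ga = 0 := by
    have e := hperp
    rw [hcq, hcr, dotN_comb3, hiso1, hiso2,
      form_symm3 hAinvSymm (cross3 p ibar) (cross3 p i)] at e
    have : (al * de + be * ga) * dot3 (cross3 p i) (A⁻¹.mulVec (cross3 p ibar)) = 0 := by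
      linear_combination e
    exact (mul_eq_zero.mp this).resolve_right hAB
  -- denominators
  have hD1 : al * P + be * Qb ≠ 0 := by
    have e : dot3 (M.mulVec p) q = al * P + be * Qb := by
      rw [hqd, comb_expand_right3, hpC]; ring
    rw [← e]
    exact tangent q hqC hpq
  have hD2 : ga * P + de * Qb ≠ 0 := by
    have e : dot3 (M.mulVec p) r = ga * P + de * Qb := by
      rw [hrd, comb_expand_right3, hpC]; ring
    rw [← e]
    exact tangent r hrC hpr
  -- the four chord pairings
  have eqi : dot3 (M.mulVec q) i = lam * P + be * K := by
    rw [hqd, comb_expand_left3, hiC, sym ibar i]; ring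
  have eqib : dot3 (M.mulVec q) ibar = lam * Qb + al * K := by
    rw [hqd, comb_expand_left3, hibarC]; ring
  have eri : dot3 (M.mulVec r) i = mu * P + de * K := by
    rw [hrd, comb_expand_left3, hiC, sym ibar i]; ring
  have erib : dot3 (M.mulVec r) ibar = mu * Qb + ga * K := by
    rw [hrd, comb_expand_left3, hibarC]; ring
  -- the Frégier computation
  show dot3 (cross3 q r) (M⁻¹.mulVec (cross3 i ibar)) = 0
  rw [Matrix.inv_def, Matrix.smul_mulVec, dot3_smul_right3]
  have main : dot3 (cross3 q r) (M.adjugate.mulVec (cross3 i ibar)) = 0 := by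
    rw [adj_pairing3 hM, eqi, eqib, eri, erib]
    have key : ((lam * P + be * K) * (mu * Qb + ga * K)
        - (lam * Qb + al * K) * (mu * P + de * K))
        * ((al * P + be * Qb) * (ga * P + de * Qb)) = 0 := by
      linear_combination
        (K ^ 2 * (al * ga * P ^ 2 + be * de * Qb ^ 2 + 2 * be * ga * P * Qb
          - (al * P + be * Qb) * (ga * P + de * Qb))) * hR1
        + (K * (ga * P - de * Qb) * (ga * P + de * Qb)) * hq2
        + (K * (be * Qb - al * P) * (al * P + be * Qb)) * hr2
    rcases mul_eq_zero.mp key with h | h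
    · exact h
    · rcases mul_eq_zero.mp h with h' | h'
      · exact absurd h' hD1
      · exact absurd h' hD2
  rw [main, mul_zero]
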